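/- For any positive function ω : [1,∞) → (0,∞) tending to infinity, there exists a slowly decreasing (indeed nondecreasing) function q on [1,∞) with q(x) = O(x·ω(x)) as x → ∞, such that q(x)/x is not boundedly decreasing, i.e., ν̄(q(x)/x; λ) = ∞ for all λ > 1. -/

import Mathlib

open Set Filter

noncomputable def nubar (f : ℝ → ℝ) (lam : ℝ) : EReal :=
  - sInf ((fun p : ℝ × ℝ => ((f p.2 - f p.1 : ℝ) : EReal)) ''
      {p : ℝ × ℝ | 1 ≤ p.1 ∧ p.1 ≤ p.2 ∧ p.2 ≤ lam * p.1})

def SlowlyDecreasingOn (f : ℝ → ℝ) (a : ℝ) : Prop :=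
  ∀ ε : ℝ, 0 < ε → ∃ lam : ℝ, 1 < lam ∧ ∃ X : ℝ, a ≤ X ∧
    ∀ x y : ℝ, X ≤ x → x ≤ y → y ≤ lam * x → f y - f x ≥ -ε

theorem exists_slowlyDecreasing_not_boundedlyDecreasing
    (ω : ℝ → ℝ) (hω_pos : ∀ x, 1 ≤ x → 0 < ω x)
    (hω_top : Filter.Tendsto ω Filter.atTop Filter.atTop) :
    ∃ q : ℝ → ℝ, MonotoneOn q (Ici (1 : ℝ)) ∧ SlowlyDecreasingOn q 1 ∧
      (∃ K X : ℝ, ∀ x, X ≤ x → q x ≤ K * (x * ω x)) ∧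
      (∀ lam : ℝ, 1 < lam → nubar (fun x => q x / x) lam = ⊤) := by
  classical
  choose B hB using fun k : ℕ => eventually_atTop.mp (hω_top.eventually_ge_atTop (k : ℝ))
  set N : ℕ → ℝ := fun k => if k = 0 then 1 else max (B k) 1 with hN_def
  have hN1 : ∀ k, (1 : ℝ) ≤ N k := by
    intro k; simp only [hN_def]; split
    · exact le_refl 1
    · exact le_max_right _ _
  have hN : ∀ k x, N k ≤ x → (k : ℝ) ≤ ω x := by
    intro k x hx
    rcases Nat.eq_zero_or_pos k with rfl | hk
    · exact_mod_cast (hω_pos x (le_trans (hN1 0) hx)).le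
    · apply hB k x
      have hne : k ≠ 0 := hk.ne'
      have : N k = max (B k) 1 := by simp [hN_def, hne]
      calc B k ≤ N k := this ▸ le_max_left _ _
        _ ≤ x := hx
  set M : ℕ → ℕ := fun n => Nat.findGreatest (fun k => N k ≤ Real.exp n) n with hM_def
  have hM_spec : ∀ n, N (M n) ≤ Real.exp n := by
    intro n
    have hN0 : N 0 = 1 := by simp [hN_def]
    exact Nat.findGreatest_spec (P := fun k => N k ≤ Real.exp n) (Nat.zero_le n)
      (show N 0 ≤ Real.exp n from (le_of_eq hN0).trans (Real.one_le_exp (Nat.cast_nonneg n)))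
  have hM_le : ∀ n, M n ≤ n := fun n => Nat.findGreatest_le n
  have hM_mono : Monotone M := by
    intro n m hnm
    exact Nat.le_findGreatest (le_trans (hM_le n) hnm)
      (le_trans (hM_spec n) (Real.exp_le_exp.mpr (by exact_mod_cast hnm)))
  have hM_unb : ∀ k : ℕ, ∃ n : ℕ, k ≤ M n := by
    intro k
    obtain ⟨m, hm⟩ := exists_nat_ge (N k)
    refine ⟨max k m, Nat.le_findGreatest (le_max_left _ _) ?_⟩
    calc N k ≤ (m : ℝ) := hm
      _ ≤ (max k m : ℕ) := by exact_mod_cast Nat.le_max_right k m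
      _ ≤ Real.exp (max k m : ℕ) := (Real.add_one_le_exp _).trans' (by linarith)
  -- the index function
  set nn : ℝ → ℕ := fun x => (⌊Real.log x⌋).toNat with hnn_def
  set q : ℝ → ℝ := fun x => Real.exp (nn x) * (M (nn x) : ℝ) with hq_def
  have hexp_le : ∀ x : ℝ, 1 ≤ x → Real.exp (nn x) ≤ x := by
    intro x hx
    have hlog : 0 ≤ Real.log x := Real.log_nonneg hx
    have h1 : ((⌊Real.log x⌋).toNat : ℝ) ≤ Real.log x := by
      calc ((⌊Real.log x⌋).toNat : ℝ) = ((⌊Real.log x⌋ : ℤ) : ℝ) := by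
            exact_mod_cast Int.toNat_of_nonneg (Int.floor_nonneg.mpr hlog)
        _ ≤ Real.log x := Int.floor_le _
    calc Real.exp (nn x) ≤ Real.exp (Real.log x) := Real.exp_le_exp.mpr h1
      _ = x := Real.exp_log (by linarith)
  have hnn_mono : ∀ x y : ℝ, 0 < x → x ≤ y → nn x ≤ nn y := by
    intro x y hx hxy
    exact Int.toNat_le_toNat (Int.floor_le_floor (Real.log_le_log hx hxy))
  have hqmono : MonotoneOn q (Ici (1 : ℝ)) := by
    intro x hx y hy hxy
    have h1 : nn x ≤ nn y := hnn_mono x y (by linarith [mem_Ici.mp hx]) hxy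
    apply mul_le_mul (Real.exp_le_exp.mpr (by exact_mod_cast h1))
      (by exact_mod_cast hM_mono h1) (Nat.cast_nonneg _) (Real.exp_nonneg _)
  refine ⟨q, hqmono, ?_, ?_, ?_⟩
  · -- slowly decreasing
    intro ε hε
    exact ⟨2, one_lt_two, 1, le_refl 1, fun x y hx hxy _ => by
      have := hqmono (mem_Ici.mpr hx) (mem_Ici.mpr (hx.trans hxy)) hxy
      linarith⟩
  · -- growth bound
    refine ⟨1, 1, fun x hx => ?_⟩
    have h1 : Real.exp (nn x) ≤ x := hexp_le x hx
    have h2 : (M (nn x) : ℝ) ≤ ω x := hN _ x ((hM_spec (nn x)).trans h1)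
    rw [one_mul]
    calc q x = Real.exp (nn x) * (M (nn x) : ℝ) := rfl
      _ ≤ x * (M (nn x) : ℝ) := by
          exact mul_le_mul_of_nonneg_right h1 (Nat.cast_nonneg _)
      _ ≤ x * ω x := mul_le_mul_of_nonneg_left h2 (by linarith)
  · -- nubar = ⊤
    intro lam hlam
    rw [nubar, EReal.neg_eq_top_iff]
    set S := ((fun p : ℝ × ℝ => ((q p.2 / p.2 - q p.1 / p.1 : ℝ) : EReal)) ''
        {p : ℝ × ℝ | 1 ≤ p.1 ∧ p.1 ≤ p.2 ∧ p.2 ≤ lam * p.1}) with hS_def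
    have key : ∀ c : ℝ, ∃ a ∈ S, a < (c : EReal) := by
      intro c
      set μ : ℝ := min lam (3/2) with hμ_def
      have hμ1 : 1 < μ := lt_min hlam (by norm_num)
      have hμlam : μ ≤ lam := min_le_left _ _
      have hμ2 : μ ≤ 3/2 := min_le_right _ _
      have hδ : 0 < 1 - 1/μ := by
        have : 1/μ < 1 := by rw [div_lt_one (by linarith)]; linarith
        linarith
      obtain ⟨k, hk⟩ := exists_nat_gt ((-c) / (1 - 1/μ))
      obtain ⟨n, hn⟩ := hM_unb k
      have hMn : (-c) / (1 - 1/μ) < (M n : ℝ) := hk.trans_le (by exact_mod_cast hn)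
      have hMn' : -c < (M n : ℝ) * (1 - 1/μ) := by
        rw [div_lt_iff₀ hδ] at hMn; linarith
      -- the pair
      set x : ℝ := Real.exp n with hx_def
      have hx1 : (1 : ℝ) ≤ x := Real.one_le_exp (Nat.cast_nonneg n)
      have hx0 : (0 : ℝ) < x := Real.exp_pos _
      have hmem : (x, μ * x) ∈ {p : ℝ × ℝ | 1 ≤ p.1 ∧ p.1 ≤ p.2 ∧ p.2 ≤ lam * p.1} := by
        refine ⟨hx1, ?_, ?_⟩
        · show x ≤ μ * x
          nlinarith
        · show μ * x ≤ lam * x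
          nlinarith
      have hnnx : nn x = n := by
        simp only [hnn_def, hx_def, Real.log_exp]
        rw [Int.floor_natCast, Int.toNat_natCast]
      have hnny : nn (μ * x) = n := by
        simp only [hnn_def, hx_def]
        rw [Real.log_mul (by linarith) (Real.exp_ne_zero _), Real.log_exp]
        have hfl : ⌊Real.log μ + (n : ℝ)⌋ = n := by
          rw [show ((n : ℝ)) = ((n : ℤ) : ℝ) by push_cast; ring, Int.floor_add_intCast]
          have h0 : ⌊Real.log μ⌋ = 0 := by
            rw [Int.floor_eq_zero_iff]
            constructor
            · exact Real.log_nonneg hμ1.le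
            · calc Real.log μ < Real.log (Real.exp 1) := by
                    apply Real.log_lt_log (by linarith)
                    have : (3:ℝ)/2 < Real.exp 1 := by
                      have := Real.add_one_le_exp (1:ℝ)
                      linarith
                    linarith
                _ = 1 := Real.log_exp 1
          rw [h0, zero_add]
        rw [hfl, Int.toNat_natCast]
      have hfx : q x / x = (M n : ℝ) := by
        rw [hq_def]
        simp only [hnnx]; simp only [hx_def]
        field_simp
      have hfy : q (μ * x) / (μ * x) = (M n : ℝ) / μ := by
        rw [hq_def]
        simp only [hnny]; simp only [hx_def]
        rw [mul_comm μ (Real.exp (n:ℝ))]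
        rw [mul_div_mul_left _ _ (Real.exp_ne_zero _)]
      refine ⟨_, ⟨(x, μ * x), hmem, rfl⟩, ?_⟩
      rw [EReal.coe_lt_coe_iff]
      simp only [hfx, hfy]
      have : (M n : ℝ) / μ - (M n : ℝ) = -((M n : ℝ) * (1 - 1/μ)) := by
        field_simp
        ring
      rw [this]
      linarith
    have hne : S.Nonempty := by
      obtain ⟨a, ha, _⟩ := key 0
      exact ⟨a, ha⟩
    rw [sInf_eq_bot]
    intro b hb
    induction b using EReal.rec with
    | bot => exact absurd hb (lt_irrefl _)
    | coe c =>
        obtain ⟨a, ha, hac⟩ := key c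
        exact ⟨a, ha, hac⟩
    | top =>
        obtain ⟨a, ha, hac⟩ := key 0
        exact ⟨a, ha, hac.trans_le le_top⟩
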